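/- For n odd, if ω₂ and ω₃ vanish on a real subspace X of a quaternionic vector space with compatible metric g and complex structures I₁, I₂, I₃ satisfying the quaternion relations, then the real part of (ω₃ + i·ω₁)^n restricted to X vanishes, where ω_j(u,v) = g(I_j u, v). -/

import Mathlib

open scoped BigOperators

/-- The `n`-th "power" of a complex-valued 2-form `ω`, as a `2n`-multilinear
expression: `(ω^n)(x₁,...,x_{2n}) = ∑_σ sign σ · ∏ᵢ ω(x_{σ(2i)}, x_{σ(2i+1)})`. -/
noncomputable def formPow {V : Type*} (ω : V → V → ℂ) (n : ℕ)
    (x : Fin (2 * n) → V) : ℂ :=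
  ∑ σ : Equiv.Perm (Fin (2 * n)),
    ((Equiv.Perm.sign σ : ℤ) : ℂ) *
      ∏ i : Fin n,
        ω (x (σ ⟨2 * i.1, by omega⟩)) (x (σ ⟨2 * i.1 + 1, by omega⟩))

/-- For `n` odd, if `ω₂` and `ω₃` vanish on a real subspace `X` of a
quaternionic Hermitian vector space, then `Re((ω₃ + i·ω₁)^n)` vanishes on `X`. -/
theorem re_formPow_vanishes (n : ℕ) (hn : Odd n)
    {V : Type*} [NormedAddCommGroup V] [InnerProductSpace ℝ V]
    (I₁ I₂ I₃ : V →ₗ[ℝ] V)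
    (hI₁ : ∀ v, I₁ (I₁ v) = -v) (hI₂ : ∀ v, I₂ (I₂ v) = -v)
    (hI₃ : ∀ v, I₃ (I₃ v) = -v)
    (h12 : ∀ v, I₁ (I₂ v) = I₃ v) (h23 : ∀ v, I₂ (I₃ v) = I₁ v)
    (h31 : ∀ v, I₃ (I₁ v) = I₂ v)
    (hg₁ : ∀ u v, (inner ℝ (I₁ u) (I₁ v) : ℝ) = inner ℝ u v)
    (hg₂ : ∀ u v, (inner ℝ (I₂ u) (I₂ v) : ℝ) = inner ℝ u v)
    (hg₃ : ∀ u v, (inner ℝ (I₃ u) (I₃ v) : ℝ) = inner ℝ u v)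
    (X : Submodule ℝ V)
    (hω₂ : ∀ u ∈ X, ∀ v ∈ X, (inner ℝ (I₂ u) v : ℝ) = 0)
    (hω₃ : ∀ u ∈ X, ∀ v ∈ X, (inner ℝ (I₃ u) v : ℝ) = 0)
    (x : Fin (2 * n) → V) (hx : ∀ i, x i ∈ X) :
    (formPow (fun u v => ((inner ℝ (I₃ u) v : ℝ) : ℂ) +
        Complex.I * ((inner ℝ (I₁ u) v : ℝ) : ℂ)) n x).re = 0 := by
  have hzero : ∀ i j, (inner ℝ (I₃ (x i)) (x j) : ℝ) = 0 :=
    fun i j => hω₃ _ (hx i) _ (hx j)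
  unfold formPow
  have hcalc : ∀ σ : Equiv.Perm (Fin (2 * n)),
      (((Equiv.Perm.sign σ : ℤ) : ℂ) *
        ∏ i : Fin n,
          ((fun u v => ((inner ℝ (I₃ u) v : ℝ) : ℂ) +
              Complex.I * ((inner ℝ (I₁ u) v : ℝ) : ℂ))
            (x (σ ⟨2 * i.1, by omega⟩)) (x (σ ⟨2 * i.1 + 1, by omega⟩))))
      = Complex.I ^ n *
          ((((Equiv.Perm.sign σ : ℤ) : ℝ) *
            ∏ i : Fin n,
              (inner ℝ (I₁ (x (σ ⟨2 * i.1, by omega⟩)))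
                (x (σ ⟨2 * i.1 + 1, by omega⟩)) : ℝ) : ℝ) : ℂ) := by
    intro σ
    simp only [hzero, Complex.ofReal_zero, zero_add]
    rw [Finset.prod_mul_distrib, Finset.prod_const]
    push_cast
    simp [Finset.card_univ]
    ring
  simp only [hcalc]
  rw [← Finset.mul_sum, ← Complex.ofReal_sum]
  obtain ⟨k, hk⟩ := hn
  subst hk
  have h2 : ((-1 : ℂ)) ^ k = (((-1 : ℝ) ^ k : ℝ) : ℂ) := by push_cast; ring
  have h1 : (Complex.I ^ (2 * k + 1)).re = 0 := by
    rw [pow_add, pow_mul, Complex.I_sq, pow_one, h2, Complex.mul_re,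
      Complex.ofReal_re, Complex.ofReal_im, Complex.I_re, Complex.I_im]
    ring
  rw [Complex.mul_re, h1, Complex.ofReal_im]
  ring
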